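/- Let G be a finite simple graph that is not complete and let H be a finite simple graph with at least two vertices. Then the strong product G ⊠ H admits a barbell partition. -/

import Mathlib

open SimpleGraph

/-- A barbell partition of a graph `G`: a partition of the vertex set into
`R`, `W1`, `W2` with `W1, W2` nonempty, no edges between `W1` and `W2`, and
every vertex of `R` has a number of neighbors in each `Wi` different from 1. -/
def IsBarbellPartition {V : Type*} (G : SimpleGraph V) (R W1 W2 : Set V) : Prop :=
  R ∪ W1 ∪ W2 = Set.univ ∧ Disjoint R W1 ∧ Disjoint R W2 ∧ Disjoint W1 W2 ∧
  W1.Nonempty ∧ W2.Nonempty ∧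
  (∀ w1 ∈ W1, ∀ w2 ∈ W2, ¬ G.Adj w1 w2) ∧
  (∀ v ∈ R, (G.neighborSet v ∩ W1).ncard ≠ 1 ∧ (G.neighborSet v ∩ W2).ncard ≠ 1)

/-- `G` admits a barbell partition. -/
def HasBarbellPartition {V : Type*} (G : SimpleGraph V) : Prop :=
  ∃ R W1 W2 : Set V, IsBarbellPartition G R W1 W2

/-- A fort of `G`: a nonempty vertex set `F` such that no vertex outside `F`
has exactly one neighbor in `F`. -/
def IsFort {V : Type*} (G : SimpleGraph V) (F : Set V) : Prop :=
  F.Nonempty ∧ ∀ v ∉ F, (G.neighborSet v ∩ F).ncard ≠ 1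

/-- The strong product of two graphs. -/
def strongProd {α β : Type*} (G : SimpleGraph α) (H : SimpleGraph β) :
    SimpleGraph (α × β) where
  Adj x y := x ≠ y ∧ (x.1 = y.1 ∨ G.Adj x.1 y.1) ∧ (x.2 = y.2 ∨ H.Adj x.2 y.2)
  symm := ⟨by
    rintro x y ⟨hne, h1, h2⟩
    exact ⟨hne.symm, h1.imp Eq.symm (fun h => h.symm), h2.imp Eq.symm (fun h => h.symm)⟩⟩
  loopless := ⟨fun x h => h.1 rfl⟩

/-- If `G` is not complete and `H` has at least two vertices, then the strong
product `G ⊠ H` admits a barbell partition. -/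
theorem strongProd_hasBarbellPartition {α β : Type*} [Fintype α] [Fintype β]
    (G : SimpleGraph α) (H : SimpleGraph β)
    (hnc : ¬ ∀ u v : α, u ≠ v → G.Adj u v)
    (hβ : 2 ≤ Fintype.card β) :
    HasBarbellPartition (strongProd G H) := by
  push_neg at hnc
  obtain ⟨u, v, huv, hadj⟩ := hnc
  by_cases hiso : ∃ b0 : β, ∀ h, ¬ H.Adj b0 h
  · -- H has an isolated vertex b0: split by rows
    obtain ⟨b0, hb0⟩ := hiso
    refine ⟨∅, {p : α × β | p.2 = b0}, {p : α × β | p.2 ≠ b0}, ?_, ?_, ?_, ?_, ?_, ?_, ?_, ?_⟩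
    · ext p; by_cases h : p.2 = b0 <;> simp [h]
    · simp
    · simp
    · rw [Set.disjoint_left]; rintro p hp hp'; exact hp' hp
    · haveI : Nonempty α := by
        rcases isEmpty_or_nonempty α with h | h
        · exact absurd huv (by simp [Subsingleton.elim u v])
        · exact h
      exact ⟨(Classical.arbitrary α, b0), rfl⟩
    · obtain ⟨b1, hb1⟩ := Fintype.exists_ne_of_one_lt_card (by omega) b0
      haveI : Nonempty α := by
        rcases isEmpty_or_nonempty α with h | h
        · exact absurd huv (by simp [Subsingleton.elim u v])
        · exact h
      exact ⟨(Classical.arbitrary α, b1), hb1⟩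
    · rintro ⟨a1, c1⟩ h1 ⟨a2, c2⟩ h2 hadj'
      simp only [Set.mem_setOf_eq] at h1 h2
      subst h1
      rcases hadj'.2.2 with h | h
      · exact h2 h.symm
      · exact hb0 c2 h
    · rintro p hp; exact absurd hp (Set.notMem_empty p)
  · -- H has no isolated vertex
    push_neg at hiso
    refine ⟨{p : α × β | p.1 ≠ u ∧ p.1 ≠ v}, {p : α × β | p.1 = u}, {p : α × β | p.1 = v},
      ?_, ?_, ?_, ?_, ?_, ?_, ?_, ?_⟩
    · ext p
      by_cases h1 : p.1 = u <;> by_cases h2 : p.1 = v <;> simp [h1, h2]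
    · rw [Set.disjoint_left]; rintro p ⟨h, _⟩ hp; exact h hp
    · rw [Set.disjoint_left]; rintro p ⟨_, h⟩ hp; exact h hp
    · rw [Set.disjoint_left]; rintro p h1 h2
      simp only [Set.mem_setOf_eq] at h1 h2
      exact huv (h1 ▸ h2 ▸ rfl)
    · haveI : Nonempty β := Fintype.card_pos_iff.mp (by omega)
      exact ⟨(u, Classical.arbitrary β), rfl⟩
    · haveI : Nonempty β := Fintype.card_pos_iff.mp (by omega)
      exact ⟨(v, Classical.arbitrary β), rfl⟩
    · rintro ⟨a1, c1⟩ h1 ⟨a2, c2⟩ h2 hadj'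
      simp only [Set.mem_setOf_eq] at h1 h2
      subst h1; subst h2
      rcases hadj'.2.1 with h | h
      · exact huv h
      · exact hadj h
    · rintro ⟨a, b⟩ ⟨hau, hav⟩
      have key : ∀ w : α, a ≠ w →
          ((strongProd G H).neighborSet (a, b) ∩ {p : α × β | p.1 = w}).ncard ≠ 1 := by
        intro w haw
        by_cases hGa : G.Adj a w
        · -- at least two neighbors: (w, b) and (w, b') for a neighbor b' of b
          obtain ⟨b', hb'⟩ := hiso b
          have h1 : (w, b) ∈ (strongProd G H).neighborSet (a, b) ∩ {p : α × β | p.1 = w} := by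
            refine ⟨⟨?_, Or.inr hGa, Or.inl rfl⟩, rfl⟩
            simp [Prod.ext_iff]; intro h; exact absurd h haw
          have h2 : (w, b') ∈ (strongProd G H).neighborSet (a, b) ∩ {p : α × β | p.1 = w} := by
            refine ⟨⟨?_, Or.inr hGa, Or.inr hb'⟩, rfl⟩
            simp [Prod.ext_iff]; intro h; exact absurd h haw
          have hne : (w, b) ≠ (w, b') := by
            simp [Prod.ext_iff]; exact H.ne_of_adj hb'
          have : 1 < ((strongProd G H).neighborSet (a, b) ∩ {p : α × β | p.1 = w}).ncard := by
            rw [Set.one_lt_ncard (Set.toFinite _)]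
            exact ⟨_, h1, _, h2, hne⟩
          omega
        · -- empty intersection
          have : (strongProd G H).neighborSet (a, b) ∩ {p : α × β | p.1 = w} = ∅ := by
            ext ⟨x, y⟩
            simp only [Set.mem_inter_iff, Set.mem_setOf_eq, Set.mem_empty_iff_false, iff_false]
            rintro ⟨hn, rfl⟩
            rcases hn.2.1 with h | h
            · exact haw h
            · exact hGa h
          rw [this, Set.ncard_empty]
          omega
      exact ⟨key u hau, key v hav⟩
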